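/- arXiv:1812.10509 — 2 statements merged into one kernel-verified Lean document; each statement's English description precedes it below -/
import Mathlib

section
/- Let f be a nonnegative, nondecreasing, bounded function on [0,1]. Suppose there exist constants 0 < σ < 1, 0 < θ < 1, M > 0, β > 0 such that f(s) ≤ θ f(t) + M/(t-s)^β for all σ < s < t < 1. Then sup_{s ∈ [0,σ]} f(s) ≤ C·M for some constant C depending only on σ, θ, β. -/
lemma geom_sum_le_inv_one_sub {r : ℝ} (h0 : 0 ≤ r) (h1 : r < 1) (n : ℕ) :
    ∑ i ∈ Finset.range n, r ^ i ≤ (1 - r)⁻¹ := by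
  have h2 : (0:ℝ) < 1 - r := by linarith
  rw [geom_sum_eq h1.ne, div_le_iff_of_neg (by linarith : r - 1 < 0)]
  have h3 : (1 - r)⁻¹ * (r - 1) = -1 := by field_simp; ring
  rw [h3]
  linarith [pow_nonneg h0 n]

/-- Iteration (absorption) lemma: if `f` is nonnegative, nondecreasing and bounded on `[0,1]`
and satisfies `f s ≤ θ f t + M/(t-s)^β` for `σ < s < t < 1`, then
`sup_{s ∈ [0,σ]} f s ≤ C M` with `C = C(σ, θ, β)`. -/
theorem stmt_0 (σ θ β : ℝ) (hσ : 0 < σ) (hσ1 : σ < 1) (hθ : 0 < θ) (hθ1 : θ < 1)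
    (hβ : 0 < β) :
    ∃ C : ℝ, 0 < C ∧ ∀ (f : ℝ → ℝ) (M : ℝ), 0 < M →
      (∀ s ∈ Set.Icc (0:ℝ) 1, 0 ≤ f s) →
      MonotoneOn f (Set.Icc (0:ℝ) 1) →
      BddAbove (f '' Set.Icc (0:ℝ) 1) →
      (∀ s t : ℝ, σ < s → s < t → t < 1 → f s ≤ θ * f t + M / (t - s) ^ β) →
      ∀ s ∈ Set.Icc (0:ℝ) σ, f s ≤ C * M := by
  -- τ : contraction ratio of the gaps, chosen so θ / τ^β = 2θ/(θ+1) < 1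
  set τ : ℝ := ((θ + 1) / 2) ^ (1 / β) with hτdef
  have hhalf : 0 < (θ + 1) / 2 := by linarith
  have hhalf1 : (θ + 1) / 2 < 1 := by linarith
  have hτ0 : 0 < τ := Real.rpow_pos_of_pos hhalf _
  have hτ1 : τ < 1 := Real.rpow_lt_one hhalf.le hhalf1 (by positivity)
  have hτβ : τ ^ β = (θ + 1) / 2 := by
    rw [hτdef, ← Real.rpow_mul hhalf.le, one_div, inv_mul_cancel₀ hβ.ne', Real.rpow_one]
  -- σ' : starting point of the iteration
  set σ' : ℝ := (σ + 1) / 2 with hσ'def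
  have hσσ' : σ < σ' := by rw [hσ'def]; linarith
  have hσ'1 : σ' < 1 := by rw [hσ'def]; linarith
  have hσ'0 : 0 < σ' := lt_trans hσ hσσ'
  -- constants
  set K : ℝ := (((1 - σ') * (1 - τ)) ^ β)⁻¹ with hKdef
  have hgpos : 0 < (1 - σ') * (1 - τ) := by
    apply mul_pos <;> linarith
  have hK0 : 0 < K := by
    rw [hKdef]; exact inv_pos.mpr (Real.rpow_pos_of_pos hgpos _)
  set r : ℝ := θ * ((θ + 1) / 2)⁻¹ with hrdef
  have hr0 : 0 < r := mul_pos hθ (inv_pos.mpr hhalf)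
  have hr1 : r < 1 := by
    rw [hrdef, inv_div, ← mul_div_assoc, div_lt_one (by linarith)]; linarith
  refine ⟨K * (1 - r)⁻¹, mul_pos hK0 (inv_pos.mpr (by linarith)), ?_⟩
  intro f M hM hf0 hmono hbdd hiter s hs
  -- the iteration points
  set t : ℕ → ℝ := fun i => 1 - (1 - σ') * τ ^ i with htdef
  have ht_mem : ∀ i, σ' ≤ t i ∧ t i < 1 := by
    intro i
    constructor
    · have h1 : τ ^ i ≤ 1 := pow_le_one₀ hτ0.le hτ1.le
      have : (1 - σ') * τ ^ i ≤ (1 - σ') * 1 :=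
        mul_le_mul_of_nonneg_left h1 (by linarith)
      simp only [htdef]; nlinarith
    · have : 0 < (1 - σ') * τ ^ i := mul_pos (by linarith) (pow_pos hτ0 i)
      simp only [htdef]; linarith
  have ht_Icc : ∀ i, t i ∈ Set.Icc (0:ℝ) 1 :=
    fun i => ⟨le_trans hσ'0.le (ht_mem i).1, (ht_mem i).2.le⟩
  -- the single step inequality
  have hstep : ∀ i : ℕ, f (t i) ≤ θ * f (t (i + 1)) + M * (K * (((θ + 1) / 2)⁻¹) ^ i) := by
    intro i
    have hlt : t i < t (i + 1) := by
      simp only [htdef]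
      have : τ ^ (i + 1) < τ ^ i := pow_lt_pow_right_of_lt_one₀ hτ0 hτ1 (by omega)
      nlinarith
    have hgap : t (i + 1) - t i = (1 - σ') * (1 - τ) * τ ^ i := by
      simp only [htdef]; ring
    have h1 := hiter (t i) (t (i + 1)) (lt_of_lt_of_le hσσ' (ht_mem i).1) hlt (ht_mem (i + 1)).2
    have hpowi : ((τ : ℝ) ^ i) ^ β = ((θ + 1) / 2) ^ i := by
      rw [← Real.rpow_natCast τ i, ← Real.rpow_mul hτ0.le, mul_comm,
        Real.rpow_mul hτ0.le, hτβ, Real.rpow_natCast]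
    have hrw : M / (t (i + 1) - t i) ^ β = M * (K * (((θ + 1) / 2)⁻¹) ^ i) := by
      rw [hgap, Real.mul_rpow hgpos.le (by positivity), hpowi, hKdef]
      rw [div_eq_mul_inv, mul_inv, inv_pow]
      try ring
    rw [hrw] at h1
    exact h1
  -- iterate
  have hiterated : ∀ n : ℕ, f (t 0) ≤ θ ^ n * f (t n) +
      M * K * ∑ i ∈ Finset.range n, r ^ i := by
    intro n
    induction n with
    | zero => simp
    | succ n ih =>
      have h1 := hstep n
      have h2 : θ ^ n * f (t n) ≤ θ ^ n * (θ * f (t (n + 1)) + M * (K * (((θ + 1) / 2)⁻¹) ^ n)) :=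
        mul_le_mul_of_nonneg_left h1 (by positivity)
      have hrn : θ ^ n * (((θ + 1) / 2)⁻¹) ^ n = r ^ n := by
        rw [hrdef, mul_pow]
      calc f (t 0) ≤ θ ^ n * f (t n) + M * K * ∑ i ∈ Finset.range n, r ^ i := ih
        _ ≤ θ ^ n * (θ * f (t (n + 1)) + M * (K * (((θ + 1) / 2)⁻¹) ^ n)) +
            M * K * ∑ i ∈ Finset.range n, r ^ i := by linarith
        _ = θ ^ (n + 1) * f (t (n + 1)) +
            M * K * (∑ i ∈ Finset.range n, r ^ i + r ^ n) := by
          rw [← hrn]; ring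
        _ = θ ^ (n + 1) * f (t (n + 1)) +
            M * K * ∑ i ∈ Finset.range (n + 1), r ^ i := by
          rw [Finset.sum_range_succ]
  -- pass to the limit
  set A : ℝ := sSup (f '' Set.Icc (0:ℝ) 1) with hAdef
  have hfA : ∀ i, f (t i) ≤ A :=
    fun i => le_csSup hbdd ⟨t i, ht_Icc i, rfl⟩
  have hbound : ∀ n : ℕ, f (t 0) ≤ θ ^ n * A + M * K * (1 - r)⁻¹ := by
    intro n
    calc f (t 0) ≤ θ ^ n * f (t n) + M * K * ∑ i ∈ Finset.range n, r ^ i := hiterated n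
      _ ≤ θ ^ n * A + M * K * (1 - r)⁻¹ := by
        gcongr
        · exact hfA n
        · exact geom_sum_le_inv_one_sub hr0.le hr1 n
  have hlim : Filter.Tendsto (fun n : ℕ => θ ^ n * A + M * K * (1 - r)⁻¹)
      Filter.atTop (nhds (0 * A + M * K * (1 - r)⁻¹)) := by
    exact (((tendsto_pow_atTop_nhds_zero_of_lt_one hθ.le hθ1).mul_const A).add
      tendsto_const_nhds)
  have hft0 : f (t 0) ≤ M * K * (1 - r)⁻¹ := by
    have := ge_of_tendsto hlim (Filter.Eventually.of_forall hbound)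
    simpa using this
  -- conclude
  have hsIcc : s ∈ Set.Icc (0:ℝ) 1 := ⟨hs.1, le_trans hs.2 (by linarith)⟩
  have hfs : f s ≤ f (t 0) :=
    hmono hsIcc (ht_Icc 0) (le_trans hs.2 (by simp [htdef]; linarith))
  calc f s ≤ f (t 0) := hfs
    _ ≤ M * K * (1 - r)⁻¹ := hft0
    _ = K * (1 - r)⁻¹ * M := by ring
end

section
/- Let λ > 1 and let v₀ ∈ L³_{loc}(ℝ³ \ {0}) be λ-DSS, i.e., v₀(x) = λ v₀(λx) for a.e. x. Suppose ∫_A |v₀|³ < ∞ where A = {x : 1/2 ≤ |x| < (3/2)λ}. Then for every ε > 0 there exists μ ∈ (0, 1/2] such that sup_{x ≠ 0} ∫_{B_{μ|x|}(x)} |v₀|³ ≤ ε. -/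
open MeasureTheory Metric Set Filter
open scoped ENNReal NNReal Topology

noncomputable abbrev E3 := EuclideanSpace ℝ (Fin 3)

lemma dss_step (lam : ℝ) (hlam : 1 < lam) (v₀ : E3 → E3) (hmeas : Measurable v₀)
    (hdss : ∀ᵐ x : E3, v₀ x = lam • v₀ (lam • x)) (x : E3) (r : ℝ) :
    (∫⁻ y in ball x r, ENNReal.ofReal (‖v₀ y‖ ^ 3))
      = ∫⁻ y in ball (lam • x) (lam * r), ENNReal.ofReal (‖v₀ y‖ ^ 3) := by
  have hlam0 : (0:ℝ) < lam := lt_trans one_pos hlam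
  have hne : lam ≠ 0 := ne_of_gt hlam0
  set g : E3 → ℝ≥0∞ := fun y => ENNReal.ofReal (‖v₀ y‖ ^ 3) with hg
  have hgmeas : Measurable g := by
    apply ENNReal.measurable_ofReal.comp
    exact (hmeas.norm.pow measurable_const)
  have hsmul : Measurable (fun y : E3 => lam • y) := measurable_const_smul lam
  -- preimage identity
  have hpre : (fun y : E3 => lam • y) ⁻¹' ball (lam • x) (lam * r) = ball x r := by
    ext y
    simp only [mem_preimage, mem_ball, dist_eq_norm, ← smul_sub, norm_smul,
      Real.norm_eq_abs, abs_of_pos hlam0]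
    exact mul_lt_mul_iff_right₀ hlam0
  -- a.e. identity
  have hae : ∀ᵐ y : E3, g y = ENNReal.ofReal (lam ^ 3) * g (lam • y) := by
    filter_upwards [hdss] with y hy
    rw [hg]
    simp only
    rw [hy, norm_smul, Real.norm_eq_abs, abs_of_pos hlam0, mul_pow,
      ENNReal.ofReal_mul (by positivity)]
  have h1 : (∫⁻ y in ball x r, g y)
      = ENNReal.ofReal (lam ^ 3) * ∫⁻ y in ball x r, g (lam • y) := by
    rw [← lintegral_const_mul' _ _ ENNReal.ofReal_ne_top]
    exact lintegral_congr_ae (ae_restrict_of_ae hae)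
  -- change of variables
  have h2 : (∫⁻ y in ball x r, g (lam • y))
      = ENNReal.ofReal ((lam ^ 3)⁻¹) * ∫⁻ z in ball (lam • x) (lam * r), g z := by
    have hind : ∀ y : E3, (ball (lam • x) (lam * r)).indicator g (lam • y)
        = (ball x r).indicator (fun y => g (lam • y)) y := by
      intro y
      rw [← hpre]
      exact (Set.indicator_comp_right (fun y : E3 => lam • y) (g := g)).symm ▸ rfl
    calc (∫⁻ y in ball x r, g (lam • y))
        = ∫⁻ y, (ball (lam • x) (lam * r)).indicator g (lam • y) := by
          rw [← lintegral_indicator measurableSet_ball]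
          exact lintegral_congr fun y => (hind y).symm ▸ rfl
      _ = ∫⁻ z, (ball (lam • x) (lam * r)).indicator g z
            ∂(Measure.map (fun y : E3 => lam • y) volume) := by
          rw [lintegral_map (hgmeas.indicator measurableSet_ball) hsmul]
      _ = ENNReal.ofReal ((lam ^ 3)⁻¹) * ∫⁻ z in ball (lam • x) (lam * r), g z := by
          rw [Measure.map_addHaar_smul volume hne, lintegral_smul_measure,
            lintegral_indicator measurableSet_ball]
          congr 2
          rw [show Module.finrank ℝ E3 = 3 from finrank_euclideanSpace_fin,
            abs_of_pos (by positivity)]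
  rw [h1, h2, ← mul_assoc, ← ENNReal.ofReal_mul (by positivity),
    mul_inv_cancel₀ (by positivity), ENNReal.ofReal_one, one_mul]

lemma dss_nat (lam : ℝ) (hlam : 1 < lam) (v₀ : E3 → E3) (hmeas : Measurable v₀)
    (hdss : ∀ᵐ x : E3, v₀ x = lam • v₀ (lam • x)) (n : ℕ) (x : E3) (r : ℝ) :
    (∫⁻ y in ball x r, ENNReal.ofReal (‖v₀ y‖ ^ 3))
      = ∫⁻ y in ball ((lam ^ n) • x) (lam ^ n * r), ENNReal.ofReal (‖v₀ y‖ ^ 3) := by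
  induction n with
  | zero => simp
  | succ n ih =>
      rw [ih, dss_step lam hlam v₀ hmeas hdss]
      rw [smul_smul, ← mul_assoc, ← pow_succ']

lemma dss_zpow (lam : ℝ) (hlam : 1 < lam) (v₀ : E3 → E3) (hmeas : Measurable v₀)
    (hdss : ∀ᵐ x : E3, v₀ x = lam • v₀ (lam • x)) (n : ℤ) (x : E3) (r : ℝ) :
    (∫⁻ y in ball x r, ENNReal.ofReal (‖v₀ y‖ ^ 3))
      = ∫⁻ y in ball ((lam ^ n) • x) (lam ^ n * r), ENNReal.ofReal (‖v₀ y‖ ^ 3) := by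
  have hne : lam ≠ 0 := ne_of_gt (lt_trans one_pos hlam)
  rcases le_or_gt 0 n with hn | hn
  · lift n to ℕ using hn
    rw [zpow_natCast]
    exact dss_nat lam hlam v₀ hmeas hdss n x r
  · have key := dss_nat lam hlam v₀ hmeas hdss (-n).toNat ((lam ^ n) • x) (lam ^ n * r)
    have hpow : (lam : ℝ) ^ ((-n).toNat) = lam ^ (-n) := by
      rw [← zpow_natCast, Int.toNat_of_nonneg (by omega)]
    rw [hpow, smul_smul, ← zpow_add₀ hne, ← mul_assoc, ← zpow_add₀ hne] at key
    simp only [neg_add_cancel, zpow_zero, one_smul, one_mul] at key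
    exact key.symm

/-- Uniform local `L³`-smallness for DSS data: if `v₀` is `λ`-DSS
(`v₀(x) = λ v₀(λx)` a.e.) with `∫_A |v₀|³ < ∞` on the annulus
`A = {1/2 ≤ |x| < (3/2)λ}`, then for every `ε > 0` there is `μ ∈ (0, 1/2]` with
`sup_{x ≠ 0} ∫_{B_{μ|x|}(x)} |v₀|³ ≤ ε`. -/
theorem stmt_13 (lam : ℝ) (hlam : 1 < lam) (v₀ : E3 → E3)
    (hmeas : Measurable v₀)
    (hdss : ∀ᵐ x : E3, v₀ x = lam • v₀ (lam • x))
    (hA : (∫⁻ x in {x : E3 | 1 / 2 ≤ ‖x‖ ∧ ‖x‖ < (3 / 2) * lam},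
        ENNReal.ofReal (‖v₀ x‖ ^ 3)) < ∞)
    (ε : ℝ) (hε : 0 < ε) :
    ∃ μ : ℝ, 0 < μ ∧ μ ≤ 1 / 2 ∧ ∀ x : E3, x ≠ 0 →
      (∫⁻ y in ball x (μ * ‖x‖), ENNReal.ofReal (‖v₀ y‖ ^ 3)) ≤ ENNReal.ofReal ε := by
  have hlam0 : (0:ℝ) < lam := lt_trans one_pos hlam
  set A : Set E3 := {x : E3 | 1 / 2 ≤ ‖x‖ ∧ ‖x‖ < (3 / 2) * lam} with hAdef
  set f : E3 → ℝ≥0∞ := fun y => ENNReal.ofReal (‖v₀ y‖ ^ 3) with hfdef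
  have hfmeas : Measurable f :=
    ENNReal.measurable_ofReal.comp (hmeas.norm.pow measurable_const)
  set ν : Measure E3 := (volume.restrict A).withDensity f with hνdef
  have hνfin : IsFiniteMeasure ν := by
    constructor
    rw [hνdef, withDensity_apply _ MeasurableSet.univ, Measure.restrict_univ]
    exact hA
  -- small balls have small ν-measure
  have hrad : ∀ z : E3, ∃ ρ > 0, ν (closedBall z (2 * ρ)) ≤ ENNReal.ofReal ε := by
    intro z
    have hz0 : ν {z} = 0 := by
      rw [hνdef, withDensity_apply _ (measurableSet_singleton z)]
      refine setLIntegral_measure_zero _ _ ?_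
      rw [Measure.restrict_apply (measurableSet_singleton z)]
      exact measure_mono_null inter_subset_left (measure_singleton z)
    have h0 : Tendsto (fun r => ν (cthickening r {z})) (𝓝 0) (𝓝 0) := by
      have := tendsto_measure_cthickening (μ := ν) (s := {z})
        ⟨1, one_pos, measure_ne_top ν _⟩
      rwa [closure_singleton, hz0] at this
    have hev : ∀ᶠ r in 𝓝 (0:ℝ), ν (cthickening r {z}) < ENNReal.ofReal ε :=
      h0.eventually_lt_const (ENNReal.ofReal_pos.2 hε)
    obtain ⟨δ, hδ0, hδ⟩ := Metric.eventually_nhds_iff.1 hev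
    refine ⟨δ / 4, by linarith, ?_⟩
    have h1 : ν (cthickening (2 * (δ / 4)) {z}) < ENNReal.ofReal ε := by
      apply hδ
      rw [Real.dist_eq]
      rw [abs_of_pos (by linarith)]
      linarith
    rw [cthickening_singleton z (by linarith)] at h1
    exact h1.le
  choose rad hrad0 hradε using hrad
  -- compactness of the annulus
  set K : Set E3 := {x : E3 | 1 ≤ ‖x‖ ∧ ‖x‖ ≤ lam} with hKdef
  have hKc : IsCompact K := by
    refine (isCompact_closedBall (0:E3) lam).of_isClosed_subset ?_ ?_
    · have : K = {x : E3 | 1 ≤ ‖x‖} ∩ {x : E3 | ‖x‖ ≤ lam} := rfl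
      rw [this]
      exact (isClosed_le continuous_const continuous_norm).inter
        (isClosed_le continuous_norm continuous_const)
    · intro x hx
      simpa [mem_closedBall, dist_zero_right] using hx.2
  obtain ⟨t, -, hcov⟩ := hKc.elim_nhds_subcover (fun z => ball z (rad z))
    (fun z _ => ball_mem_nhds z (hrad0 z))
  have hKne : K.Nonempty := by
    refine ⟨EuclideanSpace.single 0 1, ?_⟩
    constructor <;> simp [EuclideanSpace.norm_single]
    exact hlam.le
  obtain ⟨x₀, hx₀⟩ := hKne
  have htne : t.Nonempty := by
    obtain ⟨i, hi, -⟩ := mem_iUnion₂.1 (hcov hx₀)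
    exact ⟨i, hi⟩
  set r0 : ℝ := t.inf' htne rad with hr0def
  have hr0pos : 0 < r0 := (Finset.lt_inf'_iff htne).2 fun i _ => hrad0 i
  have hball : ∀ z ∈ K, ν (ball z r0) ≤ ENNReal.ofReal ε := by
    intro z hz
    obtain ⟨i, hit, hzi⟩ := mem_iUnion₂.1 (hcov hz)
    have hle : r0 ≤ rad i := Finset.inf'_le _ hit
    have hsub : ball z r0 ⊆ closedBall i (2 * rad i) := by
      intro y hy
      have h1 : dist y z < r0 := mem_ball.1 hy
      have h2 : dist z i < rad i := mem_ball.1 hzi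
      have h3 : dist y i ≤ dist y z + dist z i := dist_triangle y z i
      rw [mem_closedBall]
      linarith
    exact le_trans (measure_mono hsub) (hradε i)
  -- the final μ
  refine ⟨min (1/2) (r0 / lam), lt_min one_half_pos (div_pos hr0pos hlam0),
    min_le_left _ _, ?_⟩
  set μ : ℝ := min (1/2) (r0 / lam) with hμdef
  have hμ0 : 0 < μ := lt_min one_half_pos (div_pos hr0pos hlam0)
  have hμhalf : μ ≤ 1/2 := min_le_left _ _
  have hμr : μ ≤ r0 / lam := min_le_right _ _
  intro x hx
  have hx0 : (0:ℝ) < ‖x‖ := norm_pos_iff.2 hx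
  obtain ⟨n, hn1, hn2⟩ := exists_mem_Ico_zpow hx0 hlam
  set z : E3 := (lam ^ (-n) : ℝ) • x with hzdef
  have hpn : (0:ℝ) < lam ^ (-n) := zpow_pos hlam0 _
  have hnz : ‖z‖ = lam ^ (-n) * ‖x‖ := by
    rw [hzdef, norm_smul, Real.norm_eq_abs, abs_of_pos hpn]
  have hz1 : 1 ≤ ‖z‖ := by
    rw [hnz]
    calc (1:ℝ) = lam ^ (-n) * lam ^ n := by
          rw [← zpow_add₀ (ne_of_gt hlam0), neg_add_cancel, zpow_zero]
      _ ≤ lam ^ (-n) * ‖x‖ := by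
          exact mul_le_mul_of_nonneg_left hn1 hpn.le
  have hz2 : ‖z‖ ≤ lam := by
    rw [hnz]
    calc lam ^ (-n) * ‖x‖ ≤ lam ^ (-n) * lam ^ (n + 1) :=
          mul_le_mul_of_nonneg_left hn2.le hpn.le
      _ = lam := by
          rw [← zpow_add₀ (ne_of_gt hlam0)]
          norm_num
  have hzK : z ∈ K := ⟨hz1, hz2⟩
  -- scaling identity
  have hscale : (∫⁻ y in ball x (μ * ‖x‖), f y) = ∫⁻ y in ball z (μ * ‖z‖), f y := by
    have := dss_zpow lam hlam v₀ hmeas hdss (-n) x (μ * ‖x‖)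
    rw [hfdef]
    convert this using 3
    rw [hnz, hzdef]; ring_nf
  -- the ball around z is contained in A
  have hsubA : ball z (μ * ‖z‖) ⊆ A := by
    intro y hy
    have hd : dist y z < μ * ‖z‖ := mem_ball.1 hy
    have habs : |‖y‖ - ‖z‖| ≤ dist y z := by
      rw [dist_eq_norm]; exact abs_norm_sub_norm_le y z
    obtain ⟨ha, hb⟩ := abs_le.1 habs
    constructor
    · nlinarith
    · nlinarith
  have hsubB : ball z (μ * ‖z‖) ⊆ ball z r0 := by
    apply ball_subset_ball
    calc μ * ‖z‖ ≤ (r0 / lam) * lam := by nlinarith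
      _ = r0 := by field_simp
  have hνball : (∫⁻ y in ball z (μ * ‖z‖), f y) = ν (ball z (μ * ‖z‖)) := by
    rw [hνdef, withDensity_apply _ measurableSet_ball,
      Measure.restrict_restrict measurableSet_ball,
      inter_eq_self_of_subset_left hsubA]
  calc (∫⁻ y in ball x (μ * ‖x‖), ENNReal.ofReal (‖v₀ y‖ ^ 3))
      = ν (ball z (μ * ‖z‖)) := by rw [← hνball, ← hscale, hfdef]
    _ ≤ ν (ball z r0) := measure_mono hsubB
    _ ≤ ENNReal.ofReal ε := hball z hzK
end
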